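/- Let U and W be real n₁×r and n₂×r matrices, each with full column rank r. Then the Frobenius norm of U·Wᵀ satisfies ‖U Wᵀ‖_F ≥ √r · (det(UᵀU) · det(WᵀW))^{1/(2r)}. -/

import Mathlib

open Matrix

private lemma posDef_transpose_mul_self_aux {n r : ℕ} (U : Matrix (Fin n) (Fin r) ℝ)
    (hU : LinearIndependent ℝ U.transpose) : (Uᵀ * U).PosDef := by
  refine PosDef.of_dotProduct_mulVec_pos (by simpa using isHermitian_conjTranspose_mul_self U) fun x hx => ?_
  have hinj : Function.Injective U.mulVec := Matrix.mulVec_injective_iff.2 hU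
  have hne : U *ᵥ x ≠ 0 := by
    intro h
    exact hx (hinj (by simpa using h))
  have : star x ⬝ᵥ ((Uᵀ * U) *ᵥ x) = (U *ᵥ x) ⬝ᵥ (U *ᵥ x) := by
    rw [← mulVec_mulVec, dotProduct_mulVec]
    congr 1
    ext j
    simp [vecMul, mulVec, dotProduct, transpose_apply, mul_comm]
  rw [this]
  have h2 : 0 ≤ (U *ᵥ x) ⬝ᵥ (U *ᵥ x) := by
    apply Finset.sum_nonneg
    intro i _
    exact mul_self_nonneg _
  rcases h2.lt_or_eq with h | h
  · exact h
  · exfalso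
    apply hne
    ext i
    have := (Finset.sum_eq_zero_iff_of_nonneg (fun i _ => mul_self_nonneg ((U *ᵥ x) i))).1 h.symm
    have := this i (Finset.mem_univ i)
    simpa using mul_self_eq_zero.mp this

private lemma trace_eq_sum_eigenvalues_aux {r : ℕ} (C : Matrix (Fin r) (Fin r) ℝ)
    (hC : C.IsHermitian) : C.trace = ∑ i, hC.eigenvalues i := by
  conv_lhs => rw [hC.spectral_theorem]
  rw [Unitary.conjStarAlgAut_apply, trace_mul_cycle]
  have h1 : (star (hC.eigenvectorUnitary.val) : Matrix (Fin r) (Fin r) ℝ) *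
      hC.eigenvectorUnitary.val = 1 := Unitary.coe_star_mul_self _
  rw [h1, one_mul, trace_diagonal]
  simp

/-- AM-GM for positive semidefinite matrices: r * det^(1/r) ≤ trace. -/
private lemma trace_ge_det_rpow_aux {r : ℕ} (hr : 0 < r) (C : Matrix (Fin r) (Fin r) ℝ)
    (hC : C.PosSemidef) : (r : ℝ) * C.det ^ ((1 : ℝ) / r) ≤ C.trace := by
  have hH := hC.1
  have hev : ∀ i, 0 ≤ hH.eigenvalues i := hC.eigenvalues_nonneg
  have hdet : C.det = ∏ i, hH.eigenvalues i := by
    have := hH.det_eq_prod_eigenvalues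
    push_cast at this
    exact this
  have htr : C.trace = ∑ i, hH.eigenvalues i := trace_eq_sum_eigenvalues_aux C hH
  have hrpos : (0 : ℝ) < r := by exact_mod_cast hr
  have hAMGM := Real.geom_mean_le_arith_mean_weighted Finset.univ
    (fun _ : Fin r => (1 : ℝ) / r) hH.eigenvalues
    (fun i _ => by positivity)
    (by simp [Finset.sum_const, Finset.card_univ]; field_simp)
    (fun i _ => hev i)
  have hprod : ∏ i, hH.eigenvalues i ^ ((1 : ℝ) / r) = (∏ i, hH.eigenvalues i) ^ ((1 : ℝ) / r) :=
    Real.finset_prod_rpow Finset.univ _ (fun i _ => hev i) _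
  rw [hprod] at hAMGM
  rw [hdet, htr]
  calc (r : ℝ) * (∏ i, hH.eigenvalues i) ^ ((1 : ℝ) / r)
      ≤ (r : ℝ) * ∑ i, (1 : ℝ) / r * hH.eigenvalues i := by
        exact mul_le_mul_of_nonneg_left hAMGM hrpos.le
    _ = ∑ i, hH.eigenvalues i := by
        rw [Finset.mul_sum]
        congr 1
        ext i
        field_simp

theorem frobenius_norm_mul_transpose_ge {n₁ n₂ r : ℕ}
    (U : Matrix (Fin n₁) (Fin r) ℝ) (W : Matrix (Fin n₂) (Fin r) ℝ)
    (hU : LinearIndependent ℝ U.transpose) (hW : LinearIndependent ℝ W.transpose) :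
    Real.sqrt r * ((Uᵀ * U).det * (Wᵀ * W).det) ^ ((1 : ℝ) / (2 * r)) ≤
      Real.sqrt (∑ i, ∑ j, ((U * Wᵀ) i j) ^ 2) := by
  rcases Nat.eq_zero_or_pos r with hr | hr
  · subst hr
    simp only [Nat.cast_zero, Real.sqrt_zero, zero_mul]
    exact Real.sqrt_nonneg _
  set A := Uᵀ * U with hA_def
  set B := Wᵀ * W with hB_def
  have hA : A.PosDef := posDef_transpose_mul_self_aux U hU
  have hB : B.PosDef := posDef_transpose_mul_self_aux W hW
  have hdA : 0 < A.det := hA.det_pos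
  have hdB : 0 < B.det := hB.det_pos
  -- sum of squares equals trace (A * B)
  have hsum : ∑ i, ∑ j, ((U * Wᵀ) i j) ^ 2 = (A * B).trace := by
    have h1 : ∑ i, ∑ j, ((U * Wᵀ) i j) ^ 2 = ((U * Wᵀ) * (U * Wᵀ)ᵀ).trace := by
      simp only [trace, diag, mul_apply, transpose_apply]
      congr 1; ext i; congr 1; ext j; ring
    rw [h1, transpose_mul, transpose_transpose]
    have h2 : U * Wᵀ * (W * Uᵀ) = U * (Wᵀ * W) * Uᵀ := by
      simp only [Matrix.mul_assoc]
    rw [h2, trace_mul_cycle]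
  -- square root matrix
  set S := (open scoped MatrixOrder in CFC.sqrt A) with hS_def
  have hSps : S.PosSemidef := open scoped MatrixOrder in (CFC.sqrt_nonneg A).posSemidef
  have hSS : S * S = A := open scoped MatrixOrder in CFC.sqrt_mul_sqrt_self A hA.posSemidef.nonneg
  set C := S * B * S with hC_def
  have hCps : C.PosSemidef := by
    have := hB.posSemidef.mul_mul_conjTranspose_same S
    rwa [hSps.1.eq] at this
  have htrC : C.trace = (A * B).trace := by
    rw [hC_def, trace_mul_cycle, hSS]
  have hdetC : C.det = A.det * B.det := by
    rw [hC_def, det_mul, det_mul]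
    have : S.det * S.det = A.det := by rw [← det_mul, hSS]
    rw [mul_right_comm, this]
  have hkey : (r : ℝ) * (A.det * B.det) ^ ((1 : ℝ) / r) ≤ (A * B).trace := by
    have := trace_ge_det_rpow_aux hr C hCps
    rwa [hdetC, htrC] at this
  -- conclude
  have hrpos : (0 : ℝ) < r := by exact_mod_cast hr
  have hdd : (0 : ℝ) < A.det * B.det := mul_pos hdA hdB
  have hrhs : Real.sqrt ((r : ℝ) * (A.det * B.det) ^ ((1 : ℝ) / r)) ≤
      Real.sqrt (∑ i, ∑ j, ((U * Wᵀ) i j) ^ 2) := by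
    apply Real.sqrt_le_sqrt
    rw [hsum]
    exact hkey
  refine le_trans (le_of_eq ?_) hrhs
  rw [Real.sqrt_mul (by positivity : (0:ℝ) ≤ (r:ℝ))]
  congr 1
  rw [Real.sqrt_eq_rpow, ← Real.rpow_mul hdd.le]
  congr 1
  have hrne : (r : ℝ) ≠ 0 := hrpos.ne'
  field_simp
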